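/- Let G be a connected weighted graph with Laplacian L and v₂ an eigenvector of the second smallest eigenvalue. For any r ≥ 0, the subgraph induced on the vertex set M(r) = {i ∈ V : v₂(i) + r ≥ 0} is connected; similarly for any r ≤ 0, the subgraph induced on {i ∈ V : v₂(i) + r ≤ 0} is connected. -/

import Mathlib

open Matrix

def lapW {n : ℕ} (W : Matrix (Fin n) (Fin n) ℝ) : Matrix (Fin n) (Fin n) ℝ :=
  Matrix.diagonal (fun i => ∑ j, W i j) - W

def connectedW {n : ℕ} (W : Matrix (Fin n) (Fin n) ℝ) : Prop :=
  ∀ i j : Fin n, Relation.ReflTransGen (fun a b => W a b ≠ 0) i j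

section FiedlerAux

open scoped RealInnerProductSpace

variable {n : ℕ} {W : Matrix (Fin n) (Fin n) ℝ}

private lemma lap_mulVec (W : Matrix (Fin n) (Fin n) ℝ) (x : Fin n → ℝ) (i : Fin n) :
    (lapW W).mulVec x i = (∑ j, W i j) * x i - ∑ j, W i j * x j := by
  rw [lapW, sub_mulVec]
  simp only [Pi.sub_apply, mulVec_diagonal]
  simp [mulVec, dotProduct]

private lemma symm_apply (hsym : W.IsSymm) (i j : Fin n) : W j i = W i j := by
  conv_rhs => rw [← hsym]
  rfl

private lemma swap_sq_sum (hsym : W.IsSymm) (x : Fin n → ℝ) :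
    ∑ i, ∑ j, W i j * (x j)^2 = ∑ i, ∑ j, W i j * (x i)^2 := by
  rw [Finset.sum_comm]
  exact Finset.sum_congr rfl fun i _ => Finset.sum_congr rfl fun j _ => by
    rw [symm_apply hsym]

private lemma quad_eq (hsym : W.IsSymm) (x : Fin n → ℝ) :
    2 * (∑ i, x i * (lapW W).mulVec x i) = ∑ i, ∑ j, W i j * (x i - x j)^2 := by
  have key : ∀ i, x i * (lapW W).mulVec x i
      = ∑ j, (W i j * (x i)^2 - W i j * (x i * x j)) := by
    intro i
    have h1 : x i * ∑ j, W i j * x j = ∑ j, W i j * (x i * x j) := by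
      rw [Finset.mul_sum]; exact Finset.sum_congr rfl fun j _ => by ring
    rw [lap_mulVec, mul_sub, h1, Finset.sum_sub_distrib, Finset.sum_mul, Finset.mul_sum]
    congr 1
    exact Finset.sum_congr rfl fun j _ => by ring
  have expand : ∀ i j, W i j * (x i - x j)^2
      = (W i j * (x i)^2 - W i j * (x i * x j))
        + (W i j * (x j)^2 - W i j * (x i * x j)) := fun i j => by ring
  simp_rw [key, expand, Finset.sum_add_distrib]
  rw [two_mul]
  congr 1
  simp_rw [Finset.sum_sub_distrib]
  rw [swap_sq_sum hsym]

private lemma quad_nonneg (hsym : W.IsSymm) (hnonneg : ∀ i j, 0 ≤ W i j) (x : Fin n → ℝ) :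
    0 ≤ ∑ i, x i * (lapW W).mulVec x i := by
  have h := quad_eq hsym x
  nlinarith [Finset.sum_nonneg (fun i (_ : i ∈ Finset.univ) =>
    Finset.sum_nonneg (fun j (_ : j ∈ Finset.univ) =>
      mul_nonneg (hnonneg i j) (sq_nonneg (x i - x j))))]

private lemma ker_const (hsym : W.IsSymm) (hnonneg : ∀ i j, 0 ≤ W i j)
    (w : Fin n → ℝ) (hw : (lapW W).mulVec w = 0) {a b : Fin n}
    (hab : Relation.ReflTransGen (fun a b => W a b ≠ 0) a b) : w a = w b := by
  have hq : ∑ i, ∑ j, W i j * (w i - w j)^2 = 0 := by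
    rw [← quad_eq hsym, hw]
    simp
  have hterm : ∀ i j, W i j * (w i - w j)^2 = 0 := by
    intro i j
    have h1 : ∀ i ∈ Finset.univ (α := Fin n), 0 ≤ ∑ j, W i j * (w i - w j)^2 :=
      fun i _ => Finset.sum_nonneg fun j _ => mul_nonneg (hnonneg i j) (sq_nonneg _)
    have h2 := (Finset.sum_eq_zero_iff_of_nonneg h1).1 hq i (Finset.mem_univ i)
    have h3 : ∀ j ∈ Finset.univ (α := Fin n), 0 ≤ W i j * (w i - w j)^2 :=
      fun j _ => mul_nonneg (hnonneg i j) (sq_nonneg _)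
    exact (Finset.sum_eq_zero_iff_of_nonneg h3).1 h2 j (Finset.mem_univ j)
  induction hab with
  | refl => rfl
  | tail _ hbc ih =>
    rename_i b c _
    have := hterm b c
    have h4 : (w b - w c)^2 = 0 := by
      rcases mul_eq_zero.1 this with h | h
      · exact absurd h hbc
      · exact h
    have := pow_eq_zero_iff (n := 2) (by norm_num) |>.1 h4
    linarith [ih, sub_eq_zero.1 this]

private lemma lap_isHermitian (hsym : W.IsSymm) : (lapW W).IsHermitian := by
  show (lapW W).conjTranspose = lapW W
  rw [conjTranspose_eq_transpose_of_trivial, lapW, transpose_sub, diagonal_transpose, hsym]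

private lemma lap_isSymm (hsym : W.IsSymm) : (lapW W).IsSymm := by
  rw [Matrix.IsSymm, lapW, transpose_sub, diagonal_transpose, hsym]

private lemma rayleigh_lower (hsym : W.IsSymm) (hnonneg : ∀ i j, 0 ≤ W i j)
    (hconn : connectedW W) {lam2 : ℝ}
    (hlb : ∀ μ : ℝ, μ ≠ 0 → ∀ w : Fin n → ℝ, w ≠ 0 → (lapW W).mulVec w = μ • w → lam2 ≤ μ)
    (z : Fin n → ℝ) (hz : ∑ i, z i = 0) :
    lam2 * ∑ i, (z i)^2 ≤ ∑ i, z i * (lapW W).mulVec z i := by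
  classical
  set L := lapW W with hLdef
  have hL : L.IsHermitian := lap_isHermitian hsym
  have hLs : ∀ a b, L a b = L b a := by
    have h : Lᵀ = L := by rw [hLdef]; exact lap_isSymm hsym
    intro a b
    conv_lhs => rw [← h]
    rw [Matrix.transpose_apply]
  set B := hL.eigenvectorBasis with hB
  set μ := hL.eigenvalues with hμ
  set z' : EuclideanSpace ℝ (Fin n) := WithLp.toLp 2 z with hz'
  set c : Fin n → ℝ := fun k => ⟪(B k : EuclideanSpace ℝ (Fin n)), z'⟫ with hc
  have hck : ∀ k, c k = ∑ i, B k i * z i := by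
    intro k
    simp [hc, hz', PiLp.inner_apply, RCLike.inner_apply, mul_comm]
  have hnorm : ∑ i, (z i)^2 = ∑ k, (c k)^2 := by
    have h := B.sum_inner_mul_inner z' z'
    have h2 : ∀ k, ⟪z', (B k : EuclideanSpace ℝ (Fin n))⟫ = c k := fun k =>
      real_inner_comm _ _
    calc ∑ i, (z i)^2 = ⟪z', z'⟫ := by
          simp only [hz', PiLp.inner_apply, RCLike.inner_apply, conj_trivial, pow_two, WithLp.ofLp_toLp]
      _ = ∑ k, (c k)^2 := by
          rw [← h]
          exact Finset.sum_congr rfl fun k _ => by rw [h2, pow_two]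
  have hinnerLz : ∀ k, ⟪(B k : EuclideanSpace ℝ (Fin n)), (WithLp.toLp 2 (L.mulVec z) : EuclideanSpace ℝ (Fin n))⟫
      = μ k * c k := by
    intro k
    have heig := hL.mulVec_eigenvectorBasis k
    have heig' : ∀ j, (L.mulVec (fun i => B k i)) j = μ k * B k j := fun j =>
      congrFun heig j
    have step1 : ∑ i, B k i * (L.mulVec z) i
        = ∑ j, (L.mulVec (fun i => B k i)) j * z j := by
      simp only [Matrix.mulVec, dotProduct]
      simp_rw [Finset.mul_sum, Finset.sum_mul]
      rw [Finset.sum_comm]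
      refine Finset.sum_congr rfl fun i _ => Finset.sum_congr rfl fun j _ => ?_
      linear_combination B k j * z i * hLs j i
    calc ⟪(B k : EuclideanSpace ℝ (Fin n)), (WithLp.toLp 2 (L.mulVec z) : EuclideanSpace ℝ (Fin n))⟫
        = ∑ i, B k i * (L.mulVec z) i := by
          simp [PiLp.inner_apply, RCLike.inner_apply, mul_comm]
      _ = ∑ j, (L.mulVec (fun i => B k i)) j * z j := step1
      _ = ∑ j, (μ k * B k j) * z j :=
          Finset.sum_congr rfl fun j _ => by rw [heig' j]
      _ = μ k * c k := by
          rw [hck, Finset.mul_sum]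
          exact Finset.sum_congr rfl fun j _ => by ring
  have hquad : ∑ i, z i * L.mulVec z i = ∑ k, μ k * (c k)^2 := by
    have h := B.sum_inner_mul_inner z' (WithLp.toLp 2 (L.mulVec z) : EuclideanSpace ℝ (Fin n))
    have hL2 : ⟪z', (WithLp.toLp 2 (L.mulVec z) : EuclideanSpace ℝ (Fin n))⟫ = ∑ i, z i * L.mulVec z i := by
      simp [hz', PiLp.inner_apply, RCLike.inner_apply, mul_comm]
    rw [← hL2, ← h]
    refine Finset.sum_congr rfl fun k _ => ?_
    rw [hinnerLz k, real_inner_comm]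
    show c k * (μ k * c k) = μ k * c k ^2
    ring
  have heach : ∀ k, lam2 * (c k)^2 ≤ μ k * (c k)^2 := by
    intro k
    rcases eq_or_ne (c k) 0 with h0 | h0
    · simp [h0]
    rcases eq_or_ne (μ k) 0 with hmu | hmu
    · exfalso
      have heig := hL.mulVec_eigenvectorBasis k
      have heig' : ∀ j, (L.mulVec (fun i => B k i)) j = μ k * B k j := fun j =>
        congrFun heig j
      have hker : (lapW W).mulVec (fun i => B k i) = 0 := funext fun j => by
        rw [← hLdef, heig' j, hmu, zero_mul]; rfl
      have hconst : ∀ a b : Fin n, B k a = B k b := fun a b =>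
        ker_const hsym hnonneg _ hker (hconn a b)
      apply h0
      rw [hck]
      have : ∀ i, B k i * z i = B k k * z i := fun i => by rw [hconst i k]
      rw [Finset.sum_congr rfl fun i _ => this i, ← Finset.mul_sum, hz, mul_zero]
    · have hne : (⇑(B k) : Fin n → ℝ) ≠ 0 := by
        have := B.orthonormal.ne_zero k
        intro hcontra
        apply this
        ext i
        exact congrFun hcontra i
      have := hlb (μ k) hmu (B k) hne (hL.mulVec_eigenvectorBasis k)
      exact mul_le_mul_of_nonneg_right this (sq_nonneg _)
  calc lam2 * ∑ i, (z i)^2 = ∑ k, lam2 * (c k)^2 := by rw [hnorm, Finset.mul_sum]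
    _ ≤ ∑ k, μ k * (c k)^2 := Finset.sum_le_sum fun k _ => heach k
    _ = ∑ i, z i * L.mulVec z i := hquad.symm

private lemma estimate (hnonneg : ∀ i j, 0 ≤ W i j) {lam2 r : ℝ} {v : Fin n → ℝ}
    (hev : (lapW W).mulVec v = lam2 • v)
    (hlampos : 0 < lam2) (hrpos : 0 < r)
    (P : Fin n → Prop) [DecidablePred P]
    (hPM : ∀ c, P c → 0 ≤ v c + r)
    (hPedge : ∀ c, P c → ∀ j, ¬ P j → W c j ≠ 0 → v j + r < 0)
    (hPne : ∃ c, P c) :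
    (0 < ∑ k, (fun k => if P k then v k + r else 0) k) ∧
    (∑ i, (fun k => if P k then v k + r else 0) i
        * (lapW W).mulVec (fun k => if P k then v k + r else 0) i
      ≤ lam2 * (∑ i, ((fun k => if P k then v k + r else 0) i)^2)
        - lam2 * r * ∑ k, (fun k => if P k then v k + r else 0) k) := by
  classical
  set x : Fin n → ℝ := fun k => if P k then v k + r else 0 with hxdef
  have hx0 : ∀ k, 0 ≤ x k := by
    intro k
    by_cases h : P k
    · simpa [hxdef, h] using hPM k h
    · simp [hxdef, h]
  have hvi : ∀ i, (∑ j, W i j) * v i - ∑ j, W i j * v j = lam2 * v i := by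
    intro i
    rw [← lap_mulVec]
    exact congrFun hev i
  have hsplit : ∀ i, P i → (∑ j, W i j) * x i - ∑ j, W i j * x j
      = lam2 * v i + ∑ j, W i j * ((v j + r) - x j) := by
    intro i hPi
    have hxi : x i = v i + r := if_pos hPi
    have e1 : ∑ j, W i j * ((v j + r) - x j)
        = ((∑ j, W i j * v j) + (∑ j, W i j) * r) - ∑ j, W i j * x j := by
      rw [Finset.sum_mul]
      rw [← Finset.sum_add_distrib, ← Finset.sum_sub_distrib]
      exact Finset.sum_congr rfl fun j _ => by ring
    rw [e1, hxi]
    linarith [hvi i]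
  have hnegsum : ∀ i, P i → ∑ j, W i j * ((v j + r) - x j) ≤ 0 := by
    intro i hPi
    refine Finset.sum_nonpos fun j _ => ?_
    by_cases hPj : P j
    · have : x j = v j + r := if_pos hPj
      rw [this]
      simp
    · have hxj : x j = 0 := if_neg hPj
      rw [hxj, sub_zero]
      by_cases hW : W i j = 0
      · simp [hW]
      · have := hPedge i hPi j hPj hW
        nlinarith [hnonneg i j]
  constructor
  · by_contra hS
    push_neg at hS
    have hsum0 : ∑ k, x k = 0 :=
      le_antisymm hS (Finset.sum_nonneg fun k _ => hx0 k)
    have hall : ∀ k, x k = 0 := by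
      intro k
      exact (Finset.sum_eq_zero_iff_of_nonneg fun k _ => hx0 k).1 hsum0 k (Finset.mem_univ k)
    obtain ⟨c, hPc⟩ := hPne
    have h1 := hsplit c hPc
    have h2 := hnegsum c hPc
    simp only [hall, mul_zero, sub_zero, Finset.sum_const_zero] at h1 h2
    have hvc : v c + r = 0 := by
      have h := hall c
      simpa [hxdef, hPc] using h
    nlinarith [mul_pos hlampos hrpos]
  · have hptwise : ∀ i, x i * (lapW W).mulVec x i ≤ lam2 * (x i)^2 - lam2 * r * x i := by
      intro i
      by_cases hPi : P i
      · have hkey : (lapW W).mulVec x i ≤ lam2 * v i := by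
          rw [lap_mulVec, hsplit i hPi]
          linarith [hnegsum i hPi]
        have hxi : x i = v i + r := if_pos hPi
        have h3 : x i * (lapW W).mulVec x i ≤ x i * (lam2 * v i) :=
          mul_le_mul_of_nonneg_left hkey (hx0 i)
        have h4 : v i = x i - r := by rw [hxi]; ring
        calc x i * (lapW W).mulVec x i ≤ x i * (lam2 * v i) := h3
          _ = lam2 * (x i)^2 - lam2 * r * x i := by rw [h4]; ring
      · have hxi : x i = 0 := if_neg hPi
        rw [hxi]
        simp
    calc ∑ i, x i * (lapW W).mulVec x i
        ≤ ∑ i, (lam2 * (x i)^2 - lam2 * r * x i) := Finset.sum_le_sum fun i _ => hptwise i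
      _ = lam2 * (∑ i, (x i)^2) - lam2 * r * ∑ k, x k := by
          rw [Finset.sum_sub_distrib, Finset.mul_sum, Finset.mul_sum]

private lemma lam2_pos (hsym : W.IsSymm) (hnonneg : ∀ i j, 0 ≤ W i j)
    {lam2 : ℝ} {v : Fin n → ℝ} (hv : v ≠ 0) (hne : lam2 ≠ 0)
    (hev : (lapW W).mulVec v = lam2 • v) : 0 < lam2 := by
  have hq : ∑ i, v i * (lapW W).mulVec v i = lam2 * ∑ i, (v i)^2 := by
    rw [hev, Finset.mul_sum]
    exact Finset.sum_congr rfl fun i _ => by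
      show v i * (lam2 * v i) = lam2 * (v i)^2
      ring
  have hnn := quad_nonneg hsym hnonneg v
  obtain ⟨i, hi⟩ := Function.ne_iff.1 hv
  have hpos : 0 < ∑ i, (v i)^2 :=
    Finset.sum_pos' (fun k _ => sq_nonneg _)
      ⟨i, Finset.mem_univ i, by nlinarith [abs_pos.2 hi, sq_abs (v i)]⟩
  rcases lt_trichotomy lam2 0 with h | h | h
  · nlinarith
  · exact absurd h hne
  · exact h

private lemma core (hsym : W.IsSymm) (hnonneg : ∀ i j, 0 ≤ W i j)
    (hconn : connectedW W)
    {lam2 : ℝ} {v : Fin n → ℝ} (hv : v ≠ 0)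
    (hlam2 : IsLeast {μ : ℝ | μ ≠ 0 ∧ ∃ w : Fin n → ℝ, w ≠ 0 ∧
      (lapW W).mulVec w = μ • w} lam2)
    (hev : (lapW W).mulVec v = lam2 • v)
    {r : ℝ} (hr : 0 < r) (i j : Fin n) (hi : 0 ≤ v i + r) (hj : 0 ≤ v j + r) :
    Relation.ReflTransGen (fun a b => 0 ≤ v a + r ∧ 0 ≤ v b + r ∧ W a b ≠ 0) i j := by
  classical
  have hlampos : 0 < lam2 := lam2_pos hsym hnonneg hv hlam2.1.1 hev
  by_cases hallM : ∀ k, 0 ≤ v k + r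
  · exact Relation.ReflTransGen.mono (fun a b hw => ⟨hallM a, hallM b, hw⟩) _ _ (hconn i j)
  by_contra hnot
  set R : Fin n → Fin n → Prop :=
    fun a b => 0 ≤ v a + r ∧ 0 ≤ v b + r ∧ W a b ≠ 0 with hRdef
  set PA : Fin n → Prop := fun a => 0 ≤ v a + r ∧ Relation.ReflTransGen R i a with hPAdef
  set PB : Fin n → Prop := fun b => 0 ≤ v b + r ∧ ¬ Relation.ReflTransGen R i b with hPBdef
  have hPAi : PA i := ⟨hi, Relation.ReflTransGen.refl⟩
  have hPBj : PB j := ⟨hj, hnot⟩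
  have hAedge : ∀ c, PA c → ∀ k, ¬ PA k → W c k ≠ 0 → v k + r < 0 := by
    intro c hc k hk hW
    by_contra h
    push_neg at h
    exact hk ⟨h, hc.2.tail ⟨hc.1, h, hW⟩⟩
  have hBedge : ∀ c, PB c → ∀ k, ¬ PB k → W c k ≠ 0 → v k + r < 0 := by
    intro c hc k hk hW
    by_contra h
    push_neg at h
    have hreach : Relation.ReflTransGen R i k := by
      by_contra h2
      exact hk ⟨h, h2⟩
    have hWsymm : W c k = W k c := symm_apply hsym k c
    exact hc.2 (hreach.tail ⟨h, hc.1, hWsymm ▸ hW⟩)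
  obtain ⟨hSA, hQA⟩ := estimate hnonneg hev hlampos hr PA (fun c h => h.1) hAedge ⟨i, hPAi⟩
  obtain ⟨hSB, hQB⟩ := estimate hnonneg hev hlampos hr PB (fun c h => h.1) hBedge ⟨j, hPBj⟩
  set xA : Fin n → ℝ := fun k => if PA k then v k + r else 0 with hxA
  set xB : Fin n → ℝ := fun k => if PB k then v k + r else 0 with hxB
  have hdisjoint : ∀ k, xA k * xB k = 0 := by
    intro k
    by_cases h : PA k
    · have : xB k = 0 := if_neg (fun hB => hB.2 h.2)
      rw [this, mul_zero]
    · have : xA k = 0 := if_neg h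
      rw [this, zero_mul]
  have hnoedge : ∀ a b, PA a → PB b → W a b = 0 := by
    intro a b ha hb
    by_contra hW
    exact hb.2 (ha.2.tail ⟨ha.1, hb.1, hW⟩)
  have hprodAB : ∀ a b, W a b * xA a * xB b = 0 := by
    intro a b
    by_cases hA : PA a
    · by_cases hB : PB b
      · rw [hnoedge a b hA hB, zero_mul, zero_mul]
      · rw [show xB b = 0 from if_neg hB, mul_zero]
    · rw [show xA a = 0 from if_neg hA, mul_zero, zero_mul]
  have hprodBA : ∀ a b, W a b * xB a * xA b = 0 := by
    intro a b
    by_cases hA : PA b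
    · by_cases hB : PB a
      · have h1 : W a b = W b a := symm_apply hsym b a
        rw [h1, hnoedge b a hA hB, zero_mul, zero_mul]
      · rw [show xB a = 0 from if_neg hB, mul_zero, zero_mul]
    · rw [show xA b = 0 from if_neg hA, mul_zero]
  set SA : ℝ := ∑ k, xA k with hSAdef
  set SB : ℝ := ∑ k, xB k with hSBdef
  set z : Fin n → ℝ := fun k => SB * xA k - SA * xB k with hzdef
  have hzsum : ∑ k, z k = 0 := by
    simp only [hzdef]
    rw [Finset.sum_sub_distrib, ← Finset.mul_sum, ← Finset.mul_sum]
    ring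
  -- cross terms vanish
  have hcross1 : ∀ k, xA k * (lapW W).mulVec xB k = 0 := by
    intro k
    rw [lap_mulVec]
    have h1 : xA k * ((∑ j, W k j) * xB k) = 0 := by
      rw [show xA k * ((∑ j, W k j) * xB k) = (∑ j, W k j) * (xA k * xB k) from by ring,
        hdisjoint k, mul_zero]
    have h2 : xA k * ∑ j, W k j * xB j = 0 := by
      rw [Finset.mul_sum]
      refine Finset.sum_eq_zero fun j _ => ?_
      have := hprodAB k j
      linarith [hprodAB k j]
    rw [mul_sub, h1, h2, sub_zero]
  have hcross2 : ∀ k, xB k * (lapW W).mulVec xA k = 0 := by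
    intro k
    rw [lap_mulVec]
    have h1 : xB k * ((∑ j, W k j) * xA k) = 0 := by
      rw [show xB k * ((∑ j, W k j) * xA k) = (∑ j, W k j) * (xA k * xB k) from by ring,
        hdisjoint k, mul_zero]
    have h2 : xB k * ∑ j, W k j * xA j = 0 := by
      rw [Finset.mul_sum]
      refine Finset.sum_eq_zero fun j _ => ?_
      linarith [hprodBA k j]
    rw [mul_sub, h1, h2, sub_zero]
  have hLz : ∀ k, (lapW W).mulVec z k
      = SB * (lapW W).mulVec xA k - SA * (lapW W).mulVec xB k := by
    intro k
    rw [lap_mulVec, lap_mulVec, lap_mulVec]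
    have e : ∑ j', W k j' * z j'
        = SB * ∑ j', W k j' * xA j' - SA * ∑ j', W k j' * xB j' := by
      rw [Finset.mul_sum, Finset.mul_sum, ← Finset.sum_sub_distrib]
      refine Finset.sum_congr rfl fun j' _ => ?_
      simp only [hzdef]
      ring
    rw [e]
    simp only [hzdef]
    ring
  have hQz : ∑ k, z k * (lapW W).mulVec z k
      = SB^2 * (∑ k, xA k * (lapW W).mulVec xA k)
        + SA^2 * (∑ k, xB k * (lapW W).mulVec xB k) := by
    rw [Finset.mul_sum, Finset.mul_sum, ← Finset.sum_add_distrib]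
    refine Finset.sum_congr rfl fun k _ => ?_
    rw [hLz k]
    simp only [hzdef]
    linear_combination (-(SA * SB)) * hcross1 k + (-(SA * SB)) * hcross2 k
  have hnz : ∑ k, (z k)^2 = SB^2 * (∑ k, (xA k)^2) + SA^2 * (∑ k, (xB k)^2) := by
    rw [Finset.mul_sum, Finset.mul_sum, ← Finset.sum_add_distrib]
    refine Finset.sum_congr rfl fun k _ => ?_
    simp only [hzdef]
    linear_combination (-2 * SA * SB) * hdisjoint k
  have hlow := rayleigh_lower hsym hnonneg hconn
    (fun μ hμ w hw hevw => hlam2.2 ⟨hμ, w, hw, hevw⟩) z hzsum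
  have m1 : SB^2 * (∑ k, xA k * (lapW W).mulVec xA k)
      ≤ SB^2 * (lam2 * (∑ k, (xA k)^2) - lam2 * r * SA) :=
    mul_le_mul_of_nonneg_left hQA (sq_nonneg SB)
  have m2 : SA^2 * (∑ k, xB k * (lapW W).mulVec xB k)
      ≤ SA^2 * (lam2 * (∑ k, (xB k)^2) - lam2 * r * SB) :=
    mul_le_mul_of_nonneg_left hQB (sq_nonneg SA)
  have expand : SB^2 * (lam2 * (∑ k, (xA k)^2) - lam2 * r * SA)
      + SA^2 * (lam2 * (∑ k, (xB k)^2) - lam2 * r * SB)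
      = lam2 * ∑ k, (z k)^2 - lam2 * r * (SB^2 * SA + SA^2 * SB) := by
    rw [hnz]
    ring
  have hposS : 0 < SB^2 * SA + SA^2 * SB := by
    nlinarith [mul_pos (mul_pos hSB hSB) hSA, mul_pos (mul_pos hSA hSA) hSB]
  have hfinal : 0 < lam2 * r * (SB^2 * SA + SA^2 * SB) :=
    mul_pos (mul_pos hlampos hr) hposS
  linarith [hlow, m1, m2, hQz, expand, hfinal]

private lemma part1 (hsym : W.IsSymm) (hnonneg : ∀ i j, 0 ≤ W i j)
    (hconn : connectedW W)
    {lam2 : ℝ} {v : Fin n → ℝ} (hv : v ≠ 0)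
    (hlam2 : IsLeast {μ : ℝ | μ ≠ 0 ∧ ∃ w : Fin n → ℝ, w ≠ 0 ∧
      (lapW W).mulVec w = μ • w} lam2)
    (hev : (lapW W).mulVec v = lam2 • v) :
    ∀ r : ℝ, 0 ≤ r →
      ∀ i j : Fin n, 0 ≤ v i + r → 0 ≤ v j + r →
        Relation.ReflTransGen
          (fun a b => 0 ≤ v a + r ∧ 0 ≤ v b + r ∧ W a b ≠ 0) i j := by
  classical
  intro r hr i j hi hj
  rcases hr.lt_or_eq with hpos | heq
  · exact core hsym hnonneg hconn hv hlam2 hev hpos i j hi hj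
  · subst heq
    by_cases hneg : ∃ k, v k < 0
    · set T : Finset (Fin n) := Finset.univ.filter (fun k => v k < 0) with hT
      have hTne : T.Nonempty := by
        obtain ⟨k, hk⟩ := hneg
        exact ⟨k, by simp [hT, hk]⟩
      set m : ℝ := T.sup' hTne v with hm
      have hmneg : m < 0 := by
        rw [hm, Finset.sup'_lt_iff]
        intro k hk
        simpa [hT] using hk
      set r' : ℝ := -m / 2 with hr'
      have hr'pos : 0 < r' := by rw [hr']; linarith
      have hkey : ∀ k, (0 ≤ v k + r') ↔ (0 ≤ v k + 0) := by
        intro k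
        constructor
        · intro h
          by_contra h2
          push_neg at h2
          have hkT : k ∈ T := by simp [hT]; linarith
          have := Finset.le_sup' v hkT
          rw [← hm] at this
          rw [hr'] at h
          linarith
        · intro h
          linarith
      have h := core hsym hnonneg hconn hv hlam2 hev hr'pos i j
        ((hkey i).2 hi) ((hkey j).2 hj)
      exact Relation.ReflTransGen.mono
        (fun a b hab => ⟨(hkey a).1 hab.1, (hkey b).1 hab.2.1, hab.2.2⟩) _ _ h
    · push_neg at hneg
      exact Relation.ReflTransGen.mono
        (fun a b hw => ⟨by simpa using hneg a, by simpa using hneg b, hw⟩) _ _ (hconn i j)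

end FiedlerAux

/-- Fiedler's connectivity theorem.  For the Fiedler vector `v₂`
of a connected weighted graph, the subgraph induced on
`{i | v₂ i + r ≥ 0}` (for `r ≥ 0`) and on `{i | v₂ i + r ≤ 0}` (for `r ≤ 0`)
is connected. -/
theorem fiedler_sublevel_connected
    {n : ℕ} (W : Matrix (Fin n) (Fin n) ℝ)
    (hsym : W.IsSymm) (hnonneg : ∀ i j, 0 ≤ W i j)
    (hconn : connectedW W)
    (lam2 : ℝ) (v2 : Fin n → ℝ) (hv2 : v2 ≠ 0)
    (hlam2 : IsLeast {μ : ℝ | μ ≠ 0 ∧ ∃ w : Fin n → ℝ, w ≠ 0 ∧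
      (lapW W).mulVec w = μ • w} lam2)
    (hev : (lapW W).mulVec v2 = lam2 • v2) :
    (∀ r : ℝ, 0 ≤ r →
      ∀ i j : Fin n, 0 ≤ v2 i + r → 0 ≤ v2 j + r →
        Relation.ReflTransGen
          (fun a b => 0 ≤ v2 a + r ∧ 0 ≤ v2 b + r ∧ W a b ≠ 0) i j) ∧
    (∀ r : ℝ, r ≤ 0 →
      ∀ i j : Fin n, v2 i + r ≤ 0 → v2 j + r ≤ 0 →
        Relation.ReflTransGen
          (fun a b => v2 a + r ≤ 0 ∧ v2 b + r ≤ 0 ∧ W a b ≠ 0) i j) := by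
  constructor
  · exact part1 hsym hnonneg hconn hv2 hlam2 hev
  · intro r hr i j hi hj
    have hv2' : -v2 ≠ 0 := neg_ne_zero.2 hv2
    have hev' : (lapW W).mulVec (-v2) = lam2 • (-v2) := by
      rw [mulVec_neg, hev, smul_neg]
    have h := part1 hsym hnonneg hconn hv2' hlam2 hev' (-r) (neg_nonneg.2 hr) i j
      (by simp only [Pi.neg_apply]; linarith) (by simp only [Pi.neg_apply]; linarith)
    exact Relation.ReflTransGen.mono
      (fun a b hab => ⟨by have := hab.1; simp only [Pi.neg_apply] at this; linarith,
        by have := hab.2.1; simp only [Pi.neg_apply] at this; linarith, hab.2.2⟩) _ _ h
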